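/- Let V be a finite type with n = |V| ≥ 2 elements, adj : V → V → Prop a directed edge relation, L a natural number, and p : {0,1,…,L} → V a directed path, i.e., adj (p j) (p (j+1)) for every j < L. Let d̂ : V → ℤ, let h : V → ℕ be a heaviness assignment with 2^{h(u)} ≤ n for all u, let F : V → Finset V, and let ε, τ > 0 be real numbers. Assume: (i) for all u, v with v ∈ F(u), |d̂(v) − d̂(u)| ≤ 2^{h(u)}; (ii) for every u, (2^{h(u)} − 1) · 6 · n · log₂ n / (ε·τ) ≤ |F(u)|; (iii) for every j < L, either p (j+1) ∈ F(p j) or d̂(p (j+1)) ≤ d̂(p j) + 1; (iv) for every j < L with h(p j) = 0, d̂(p (j+1)) ≤ d̂(p j) + 1. Then d̂(p L) ≤ d̂(p 0) + L + ε·τ. -/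

import Mathlib

open Finset

/-- Running maximum of an integer sequence. -/
private def runmax (f : ℕ → ℤ) : ℕ → ℤ
  | 0 => f 0
  | j + 1 => max (runmax f j) (f (j + 1))

private lemma runmax_mono (f : ℕ → ℤ) : Monotone (runmax f) :=
  monotone_nat_of_le_succ fun _ => le_max_left _ _

private lemma le_runmax (f : ℕ → ℤ) : ∀ j, f j ≤ runmax f j
  | 0 => le_refl _
  | _ + 1 => le_max_right _ _

/-- Double-counting lemma: windows `Ioc (M j) (M (j+1))` are pairwise disjoint,
and each pair (threshold, witness vertex) lands in a window of length `3c`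
around the vertex's estimate. -/
private lemma count_lemma {V : Type*} [Fintype V] [DecidableEq V] (dhat : V → ℤ) (M : ℕ → ℤ)
    (Mmono : Monotone M) (G : ℕ → Finset V) (c : ℤ)
    (S : Finset ℕ)
    (hlo : ∀ j ∈ S, ∀ w ∈ G j, dhat w - c ≤ M j)
    (hhi : ∀ j ∈ S, ∀ w ∈ G j, M (j + 1) ≤ dhat w + 2 * c) :
    ∑ j ∈ S, (M (j + 1) - M j).toNat * (G j).card ≤ Fintype.card V * (3 * c).toNat := by
  classical
  set A : ℕ → Finset (ℤ × V) := fun j => Finset.Ioc (M j) (M (j + 1)) ×ˢ G j with hA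
  have hcard : ∀ j, (A j).card = (M (j + 1) - M j).toNat * (G j).card := by
    intro j
    simp [hA, Finset.card_product, Int.card_Ioc]
  have hdisj : ∀ x ∈ S, ∀ y ∈ S, x ≠ y → Disjoint (A x) (A y) := by
    have key : ∀ x y : ℕ, x < y → Disjoint (A x) (A y) := by
      intro x y hxy
      rw [Finset.disjoint_left]
      rintro ⟨t, w⟩ htx hty
      simp only [hA, Finset.mem_product, Finset.mem_Ioc] at htx hty
      have h1 : t ≤ M (x + 1) := htx.1.2
      have h2 : M y < t := hty.1.1
      have h3 : M (x + 1) ≤ M y := Mmono hxy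
      omega
    intro x hx y hy hxy
    rcases lt_or_gt_of_ne hxy with hlt | hgt
    · exact key x y hlt
    · exact (key y x hgt).symm
  have hbU : (S.biUnion A).card = ∑ j ∈ S, (A j).card := Finset.card_biUnion hdisj
  set big : Finset (ℤ × V) :=
    Finset.univ.biUnion (fun w => Finset.Ioc (dhat w - c) (dhat w + 2 * c) ×ˢ {w}) with hbig
  have hsub : S.biUnion A ⊆ big := by
    intro x hx
    rcases Finset.mem_biUnion.mp hx with ⟨j, hj, hxj⟩
    obtain ⟨t, w⟩ := x
    simp only [hA, Finset.mem_product, Finset.mem_Ioc] at hxj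
    obtain ⟨⟨ht1, ht2⟩, hw⟩ := hxj
    have hl := hlo j hj w hw
    have hr := hhi j hj w hw
    rw [hbig, Finset.mem_biUnion]
    exact ⟨w, Finset.mem_univ w, by
      simp only [Finset.mem_product, Finset.mem_Ioc, Finset.mem_singleton]
      refine ⟨⟨by omega, by omega⟩, by simp⟩⟩
  have hbigcard : big.card ≤ Fintype.card V * (3 * c).toNat := by
    calc big.card ≤ ∑ w : V, (Finset.Ioc (dhat w - c) (dhat w + 2 * c) ×ˢ ({w} : Finset V)).card :=
          Finset.card_biUnion_le
      _ = ∑ w : V, (3 * c).toNat := by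
          apply Finset.sum_congr rfl
          intro w _
          rw [Finset.card_product, Int.card_Ioc, Finset.card_singleton, mul_one]
          congr 1
          ring
      _ = Fintype.card V * (3 * c).toNat := by
          rw [Finset.sum_const, Finset.card_univ, smul_eq_mul]
  calc ∑ j ∈ S, (M (j + 1) - M j).toNat * (G j).card = ∑ j ∈ S, (A j).card := by
        exact (Finset.sum_congr rfl fun j _ => (hcard j).symm)
    _ = (S.biUnion A).card := hbU.symm
    _ ≤ big.card := Finset.card_le_card hsub
    _ ≤ Fintype.card V * (3 * c).toNat := hbigcard

/-- Abstract correctness of the lazy ES-tree (Lemma `lem:correct`): along a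
directed path `p` with `L` edges, if estimates in forward neighborhoods are
within `2^{h(u)}` of their owner's, each vertex `u` has forward neighborhood of
size at least `(2^{h(u)} − 1)·6·n·log₂ n/(ε·τ)`, each path edge either goes
into the tail's forward neighborhood or contributes no error, and tails of
heaviness `0` contribute no error, then `d̂(p L) ≤ d̂(p 0) + L + ε·τ`. -/
theorem lazy_es_tree_error_bound {V : Type*} [Fintype V] (n : ℕ) (hn : n = Fintype.card V)
    (hn2 : 2 ≤ n) (adj : V → V → Prop) (L : ℕ) (p : Fin (L + 1) → V)
    (hpath : ∀ j : Fin L, adj (p j.castSucc) (p j.succ))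
    (dhat : V → ℤ) (h : V → ℕ) (hh : ∀ u : V, 2 ^ h u ≤ n) (F : V → Finset V)
    (ε τ : ℝ) (hε : 0 < ε) (hτ : 0 < τ)
    (hclose : ∀ u v : V, v ∈ F u → |dhat v - dhat u| ≤ 2 ^ h u)
    (hsize : ∀ u : V, ((2 : ℝ) ^ h u - 1) * 6 * n * Real.logb 2 n / (ε * τ) ≤ (F u).card)
    (hedge : ∀ j : Fin L, p j.succ ∈ F (p j.castSucc) ∨ dhat (p j.succ) ≤ dhat (p j.castSucc) + 1)
    (hlight : ∀ j : Fin L, h (p j.castSucc) = 0 → dhat (p j.succ) ≤ dhat (p j.castSucc) + 1) :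
    (dhat (p (Fin.last L)) : ℝ) ≤ (dhat (p 0) : ℝ) + L + ε * τ := by
  classical
  set q : ℕ → V := fun j => p ⟨min j L, Nat.lt_succ_of_le (min_le_right _ _)⟩ with hqdef
  have hq0 : q 0 = p 0 := by
    simp only [hqdef]
    congr 1
  have hqL : q L = p (Fin.last L) := by
    simp only [hqdef]
    congr 1
    exact Fin.ext (by simp [Fin.last])
  have hqc : ∀ (j : ℕ) (hj : j < L), q j = p (Fin.castSucc ⟨j, hj⟩) := by
    intro j hj
    simp only [hqdef]
    congr 1
    exact Fin.ext (by simp [Nat.min_eq_left hj.le])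
  have hqs : ∀ (j : ℕ) (hj : j < L), q (j + 1) = p (Fin.succ ⟨j, hj⟩) := by
    intro j hj
    simp only [hqdef]
    congr 1
    exact Fin.ext (by simp [Nat.min_eq_left hj])
  set M : ℕ → ℤ := runmax (fun j => dhat (q j)) with hMdef
  have hMmono : Monotone M := runmax_mono _
  have hM0 : M 0 = dhat (q 0) := rfl
  have hMle : ∀ j, dhat (q j) ≤ M j := le_runmax _
  have hMsucc : ∀ j, M (j + 1) = max (M j) (dhat (q (j + 1))) := fun _ => rfl
  -- bad steps
  set T : Finset ℕ := (Finset.range L).filter (fun j => 2 ≤ M (j + 1) - M j) with hTdef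
  have hbad : ∀ j ∈ T, q (j + 1) ∈ F (q j) ∧ 1 ≤ h (q j) ∧
      M (j + 1) = dhat (q (j + 1)) ∧ dhat (q (j + 1)) ≤ dhat (q j) + 2 ^ (h (q j)) := by
    intro j hj
    rw [hTdef, Finset.mem_filter, Finset.mem_range] at hj
    obtain ⟨hjL, hr⟩ := hj
    have hmax := hMsucc j
    have hMeq : M (j + 1) = dhat (q (j + 1)) := by
      rcases max_cases (M j) (dhat (q (j + 1))) with ⟨he, _⟩ | ⟨he, _⟩ <;> omega
    have hgt : dhat (q j) + 1 < dhat (q (j + 1)) := by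
      have := hMle j
      omega
    have hne : ¬ (dhat (q (j + 1)) ≤ dhat (q j) + 1) := by omega
    have hedge' := hedge ⟨j, hjL⟩
    rw [← hqc j hjL, ← hqs j hjL] at hedge'
    have hmem : q (j + 1) ∈ F (q j) := by tauto
    have hlight' := hlight ⟨j, hjL⟩
    rw [← hqc j hjL, ← hqs j hjL] at hlight'
    have hpos : 1 ≤ h (q j) := by
      by_contra hc
      exact hne (hlight' (by omega))
    have hcl := hclose (q j) (q (j + 1)) hmem
    rw [abs_le] at hcl
    exact ⟨hmem, hpos, hMeq, by linarith [hcl.2]⟩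
  -- telescoping
  have htel : M L - M 0 = ∑ j ∈ Finset.range L, (M (j + 1) - M j) :=
    (Finset.sum_range_sub M L).symm
  have hsplit : ∑ j ∈ Finset.range L, (M (j + 1) - M j) ≤ L + ∑ j ∈ T, (M (j + 1) - M j) := by
    rw [← Finset.sum_filter_add_sum_filter_not (Finset.range L) (fun j => 2 ≤ M (j + 1) - M j)]
    have hcard : ((Finset.range L).filter (fun j => ¬ 2 ≤ M (j + 1) - M j)).card ≤ L :=
      le_trans (Finset.card_filter_le _ _) (le_of_eq (Finset.card_range L))
    have h1 : ∑ j ∈ (Finset.range L).filter (fun j => ¬ 2 ≤ M (j + 1) - M j),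
        (M (j + 1) - M j) ≤ L := by
      calc ∑ j ∈ (Finset.range L).filter (fun j => ¬ 2 ≤ M (j + 1) - M j), (M (j + 1) - M j)
          ≤ ∑ _j ∈ (Finset.range L).filter (fun j => ¬ 2 ≤ M (j + 1) - M j), (1 : ℤ) := by
            apply Finset.sum_le_sum
            intro j hj
            rw [Finset.mem_filter] at hj
            omega
        _ = (((Finset.range L).filter (fun j => ¬ 2 ≤ M (j + 1) - M j)).card : ℤ) := by
            simp
        _ ≤ (L : ℤ) := by exact_mod_cast hcard
    rw [← hTdef]
    omega
  -- positivity facts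
  have hnpos : (0 : ℝ) < n := by positivity
  have hlgn1 : (1 : ℝ) ≤ Real.logb 2 n := by
    rw [show (1 : ℝ) = Real.logb 2 2 from (Real.logb_self_eq_one (by norm_num)).symm]
    exact Real.logb_le_logb_of_le (by norm_num) (by norm_num) (by exact_mod_cast hn2)
  have hlgnpos : (0 : ℝ) < Real.logb 2 n := lt_of_lt_of_le one_pos hlgn1
  have hετ : (0 : ℝ) < ε * τ := mul_pos hε hτ
  -- per-level bound
  set H : Finset ℕ := T.image (fun j => h (q j)) with hHdef
  have hlevel : ∀ h₀ ∈ H,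
      ∑ j ∈ T.filter (fun j => h (q j) = h₀), ((M (j + 1) - M j : ℤ) : ℝ)
        ≤ ε * τ / Real.logb 2 n := by
    intro h₀ hh₀
    rw [hHdef, Finset.mem_image] at hh₀
    obtain ⟨j₀, hj₀T, hj₀⟩ := hh₀
    have h₀pos : 1 ≤ h₀ := hj₀ ▸ (hbad j₀ hj₀T).2.1
    set S := T.filter (fun j => h (q j) = h₀) with hSdef
    -- counting lemma hypotheses
    have hlo : ∀ j ∈ S, ∀ w ∈ F (q j), dhat w - 2 ^ h₀ ≤ M j := by
      intro j hj w hw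
      rw [hSdef, Finset.mem_filter] at hj
      have hcl := hclose (q j) w hw
      rw [abs_le, hj.2] at hcl
      linarith [hcl.2, hMle j]
    have hhi : ∀ j ∈ S, ∀ w ∈ F (q j), M (j + 1) ≤ dhat w + 2 * 2 ^ h₀ := by
      intro j hj w hw
      rw [hSdef, Finset.mem_filter] at hj
      obtain ⟨hjT, hjh⟩ := hj
      obtain ⟨hmem, _, hMeq, hup⟩ := hbad j hjT
      have hcl := hclose (q j) w hw
      rw [abs_le, hjh] at hcl
      rw [hjh] at hup
      rw [hMeq]
      linarith [hcl.1, hup]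
    have hcount := count_lemma dhat M hMmono (fun j => F (q j)) (2 ^ h₀) S hlo hhi
    -- translate to reals
    have hrnn : ∀ j, (0 : ℤ) ≤ M (j + 1) - M j := fun j =>
      sub_nonneg.mpr (hMmono (Nat.le_succ j))
    have hcast : ∑ j ∈ S, ((M (j + 1) - M j : ℤ) : ℝ) * ((F (q j)).card : ℝ)
        = ((∑ j ∈ S, (M (j + 1) - M j).toNat * (F (q j)).card : ℕ) : ℝ) := by
      rw [Nat.cast_sum]
      apply Finset.sum_congr rfl
      intro j _
      have h1 : ((M (j + 1) - M j).toNat : ℤ) = M (j + 1) - M j := Int.toNat_of_nonneg (hrnn j)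
      have h2 : ((M (j + 1) - M j : ℤ) : ℝ) = (((M (j + 1) - M j).toNat : ℕ) : ℝ) := by
        exact_mod_cast h1.symm
      rw [Nat.cast_mul, ← h2]
    set s : ℝ := ((2 : ℝ) ^ h₀ - 1) * 6 * n * Real.logb 2 n / (ε * τ) with hsdef
    have h2h : (2 : ℝ) ≤ (2 : ℝ) ^ h₀ := by
      calc (2 : ℝ) = 2 ^ 1 := (pow_one 2).symm
        _ ≤ 2 ^ h₀ := pow_le_pow_right₀ (by norm_num) h₀pos
    have hspos : 0 < s := by
      rw [hsdef]
      apply div_pos _ hετ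
      have : (0:ℝ) < (2 : ℝ) ^ h₀ - 1 := by linarith
      positivity
    have hsle : ∀ j ∈ S, s ≤ ((F (q j)).card : ℝ) := by
      intro j hj
      rw [hSdef, Finset.mem_filter] at hj
      have := hsize (q j)
      rw [hj.2] at this
      rw [hsdef]
      exact this
    have step1 : s * ∑ j ∈ S, ((M (j + 1) - M j : ℤ) : ℝ)
        ≤ ∑ j ∈ S, ((M (j + 1) - M j : ℤ) : ℝ) * ((F (q j)).card : ℝ) := by
      rw [Finset.mul_sum]
      apply Finset.sum_le_sum
      intro j hj
      have hr0 : (0 : ℝ) ≤ ((M (j + 1) - M j : ℤ) : ℝ) := by exact_mod_cast hrnn j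
      calc s * ((M (j + 1) - M j : ℤ) : ℝ) = ((M (j + 1) - M j : ℤ) : ℝ) * s := by ring
        _ ≤ ((M (j + 1) - M j : ℤ) : ℝ) * ((F (q j)).card : ℝ) :=
            mul_le_mul_of_nonneg_left (hsle j hj) hr0
    have step2 : ((∑ j ∈ S, (M (j + 1) - M j).toNat * (F (q j)).card : ℕ) : ℝ)
        ≤ (n : ℝ) * (3 * (2 : ℝ) ^ h₀) := by
      have h3c : ((3 * (2 : ℤ) ^ h₀).toNat : ℝ) = 3 * (2 : ℝ) ^ h₀ := by
        have : (0 : ℤ) ≤ 3 * 2 ^ h₀ := by positivity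
        rw [show ((3 * (2 : ℤ) ^ h₀).toNat : ℝ) = (((3 * (2 : ℤ) ^ h₀).toNat : ℤ) : ℝ) by norm_cast,
          Int.toNat_of_nonneg this]
        push_cast
        ring
      calc ((∑ j ∈ S, (M (j + 1) - M j).toNat * (F (q j)).card : ℕ) : ℝ)
          ≤ ((Fintype.card V * (3 * (2 : ℤ) ^ h₀).toNat : ℕ) : ℝ) := by exact_mod_cast hcount
        _ = (n : ℝ) * (3 * (2 : ℝ) ^ h₀) := by
            rw [Nat.cast_mul, h3c, hn]
    have step3 : (n : ℝ) * (3 * (2 : ℝ) ^ h₀) ≤ s * (ε * τ / Real.logb 2 n) := by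
      have heq : s * (ε * τ / Real.logb 2 n) = ((2 : ℝ) ^ h₀ - 1) * 6 * n := by
        rw [hsdef]
        field_simp
      rw [heq]
      nlinarith [hnpos, h2h]
    have := le_trans (le_trans step1 (le_of_eq hcast)) (le_trans step2 step3)
    exact le_of_mul_le_mul_left this hspos
  -- sum over levels
  have hfib : ∑ j ∈ T, ((M (j + 1) - M j : ℤ) : ℝ)
      = ∑ h₀ ∈ H, ∑ j ∈ T.filter (fun j => h (q j) = h₀), ((M (j + 1) - M j : ℤ) : ℝ) := by
    rw [Finset.sum_fiberwise_of_maps_to (fun j hj => Finset.mem_image_of_mem _ hj)]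
  have hHcard : (H.card : ℝ) ≤ Real.logb 2 n := by
    have hsub : H ⊆ Finset.Icc 1 (Nat.log 2 n) := by
      intro h₀ hh₀
      rw [hHdef, Finset.mem_image] at hh₀
      obtain ⟨j₀, hj₀T, hj₀⟩ := hh₀
      rw [Finset.mem_Icc]
      constructor
      · exact hj₀ ▸ (hbad j₀ hj₀T).2.1
      · have := hh (q j₀)
        rw [hj₀] at this
        exact (Nat.le_log_iff_pow_le (by norm_num) (by omega)).mpr this
    have h1 : H.card ≤ Nat.log 2 n := by
      calc H.card ≤ (Finset.Icc 1 (Nat.log 2 n)).card := Finset.card_le_card hsub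
        _ = Nat.log 2 n := by rw [Nat.card_Icc]; omega
    have h2 : ((Nat.log 2 n : ℕ) : ℝ) ≤ Real.logb 2 n := by
      have hp : ((2 : ℕ) ^ Nat.log 2 n : ℕ) ≤ n := Nat.pow_log_le_self 2 (by omega)
      have hp' : ((2 : ℝ)) ^ Nat.log 2 n ≤ (n : ℝ) := by exact_mod_cast hp
      calc ((Nat.log 2 n : ℕ) : ℝ) = Real.logb 2 ((2 : ℝ) ^ Nat.log 2 n) := by
            rw [Real.logb_pow, Real.logb_self_eq_one (by norm_num), mul_one]
        _ ≤ Real.logb 2 n := Real.logb_le_logb_of_le (by norm_num) (by positivity) hp'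
    calc (H.card : ℝ) ≤ ((Nat.log 2 n : ℕ) : ℝ) := by exact_mod_cast h1
      _ ≤ Real.logb 2 n := h2
  have hTsum : ∑ j ∈ T, ((M (j + 1) - M j : ℤ) : ℝ) ≤ ε * τ := by
    rw [hfib]
    calc ∑ h₀ ∈ H, ∑ j ∈ T.filter (fun j => h (q j) = h₀), ((M (j + 1) - M j : ℤ) : ℝ)
        ≤ H.card • (ε * τ / Real.logb 2 n) := Finset.sum_le_card_nsmul _ _ _ hlevel
      _ = (H.card : ℝ) * (ε * τ / Real.logb 2 n) := by rw [nsmul_eq_mul]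
      _ ≤ Real.logb 2 n * (ε * τ / Real.logb 2 n) := by
          apply mul_le_mul_of_nonneg_right hHcard
          positivity
      _ = ε * τ := by field_simp
  -- final assembly
  have hfin1 : (dhat (p (Fin.last L)) : ℝ) - (dhat (p 0) : ℝ)
      ≤ (L : ℝ) + ∑ j ∈ T, ((M (j + 1) - M j : ℤ) : ℝ) := by
    have hZ : dhat (p (Fin.last L)) - dhat (p 0) ≤ (L : ℤ) + ∑ j ∈ T, (M (j + 1) - M j) := by
      have h1 : dhat (p (Fin.last L)) ≤ M L := hqL ▸ hMle L
      have h2 : M 0 = dhat (p 0) := by rw [hM0, hq0]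
      omega
    calc (dhat (p (Fin.last L)) : ℝ) - (dhat (p 0) : ℝ)
        = (((dhat (p (Fin.last L)) - dhat (p 0)) : ℤ) : ℝ) := by push_cast; ring
      _ ≤ (((L : ℤ) + ∑ j ∈ T, (M (j + 1) - M j) : ℤ) : ℝ) := by exact_mod_cast hZ
      _ = (L : ℝ) + ∑ j ∈ T, ((M (j + 1) - M j : ℤ) : ℝ) := by push_cast; ring
  linarith [hTsum, hfin1]
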